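/- Let K⟨X⟩ have a weight ℕ-grading, ≺_gr an ℕ-graded monomial ordering, 𝒢 a finite Gröbner basis of I = ⟨𝒢⟩ with respect to ≺_gr, A = K⟨X⟩/I with the filtration F_p A = (F_p K⟨X⟩ + I)/I induced from the grading filtration of K⟨X⟩. Then the associated graded algebra G(A) = ⊕_p F_pA/F_{p-1}A is isomorphic as an ℕ-graded K-algebra to K⟨X⟩/⟨LH(𝒢)⟩, where LH(𝒢) is the set of leading homogeneous components of elements of 𝒢. -/

import Mathlib

open scoped Classical



/-- Words in the letters `X_1, …, X_n`: the free monoid on `Fin n`. -/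
abbrev Word (n : ℕ) := FreeMonoid (Fin n)

/-- The free associative `K`-algebra `K⟨X_1,…,X_n⟩`, realised as the monoid algebra of the
free monoid on `Fin n`. -/
abbrev FreeAlg (K : Type) [Field K] (n : ℕ) := MonoidAlgebra K (Word n)

/-- The word `v` divides the word `u` if `u = w * v * s` for some words `w, s`. -/
def WDvd {n : ℕ} (v u : Word n) : Prop := ∃ w s : Word n, u = w * v * s

/-- The monomial of `K⟨X⟩` corresponding to a word. -/
noncomputable def mono {K : Type} [Field K] {n : ℕ} (w : Word n) : FreeAlg K n :=
  MonoidAlgebra.single w 1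

/-- The two-sided ideal of `K⟨X⟩` generated by a set of words (a monomial ideal). -/
noncomputable def monIdeal (K : Type) [Field K] {n : ℕ} (Ω : Set (Word n)) :
    TwoSidedIdeal (FreeAlg K n) :=
  TwoSidedIdeal.span (mono '' Ω)

/-- A ring is semiprime if `a R a = 0` implies `a = 0`. -/
def IsSemiprimeRing (R : Type*) [Ring R] : Prop :=
  ∀ a : R, (∀ r : R, a * r * a = 0) → a = 0

/-- A ring is semiprimitive (Jacobson semisimple) if its Jacobson radical is zero. -/
def IsSemiprimitiveRing (R : Type*) [Ring R] : Prop :=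
  (⊥ : TwoSidedIdeal R).jacobson = ⊥

/-- A monomial ordering on the words: a multiplication-compatible well-ordering. -/
structure MonOrder (n : ℕ) where
  /-- the strict order relation -/
  lt : Word n → Word n → Prop
  trichotomous : ∀ u v : Word n, lt u v ∨ u = v ∨ lt v u
  trans : ∀ {u v w : Word n}, lt u v → lt v w → lt u w
  wf : WellFounded lt
  mul_compat : ∀ u v w s : Word n, lt u v → lt (w * u * s) (w * v * s)
  one_lt : ∀ u w s : Word n, w * u * s ≠ u → lt u (w * u * s)

/-- The leading monomial (word) of a nonzero element of `K⟨X⟩` with respect to a monomial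
ordering: the `≺`-largest word in its support (and `1` by convention for `0`). -/
noncomputable def LM {K : Type} [Field K] {n : ℕ} (o : MonOrder n) (f : FreeAlg K n) :
    Word n :=
  if h : ∃ w ∈ f.coeff.support, ∀ v ∈ f.coeff.support, v ≠ w → o.lt v w then h.choose else 1

/-- The weight degree of a word, where the letter `i` has weight `wt i`. -/
def wdeg {n : ℕ} (wt : Fin n → ℕ) (u : Word n) : ℕ :=
  (FreeMonoid.toList u |>.map wt).sum

/-- `f` is homogeneous of degree `p` with respect to the weight grading. -/
def IsHomogeneous {K : Type} [Field K] {n : ℕ} (wt : Fin n → ℕ) (f : FreeAlg K n)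
    (p : ℕ) : Prop :=
  ∀ w ∈ f.coeff.support, wdeg wt w = p

/-- The (highest-degree) leading homogeneous component of `f` with respect to the weight
grading. -/
noncomputable def LH {K : Type} [Field K] {n : ℕ} (wt : Fin n → ℕ) (f : FreeAlg K n) :
    FreeAlg K n :=
  MonoidAlgebra.ofCoeff (Finsupp.filter (fun w => wdeg wt w = f.coeff.support.sup (wdeg wt)) f.coeff)

/-- `𝒢` is a Gröbner basis of the two-sided ideal `I` w.r.t. the monomial ordering `o`:
`𝒢 ⊆ I ∖ {0}` and the leading monomials of `I` and of `𝒢` generate the same monomial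
ideal. -/
def IsGrobnerBasis {K : Type} [Field K] {n : ℕ} (o : MonOrder n)
    (𝒢 : Set (FreeAlg K n)) (I : TwoSidedIdeal (FreeAlg K n)) : Prop :=
  𝒢 ⊆ {f | f ∈ I ∧ f ≠ 0} ∧
    monIdeal K (LM o '' {f : FreeAlg K n | f ∈ I ∧ f ≠ 0}) = monIdeal K (LM o '' 𝒢)

/-- The natural `K`-algebra structure on the quotient of a `K`-algebra by a ring
congruence. -/
noncomputable instance ringConQuotientAlgebra {K A : Type*} [CommSemiring K] [Semiring A]
    [Algebra K A] (c : RingCon A) : Algebra K c.Quotient :=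
  { algebraMap := (RingCon.mk' c).comp (algebraMap K A)
    smul := (· • ·)
    commutes' := fun k => Quotient.ind' fun a =>
      congrArg (RingCon.toQuotient (c := c)) (Algebra.commutes k a)
    smul_def' := fun k => Quotient.ind' fun a =>
      congrArg (RingCon.toQuotient (c := c)) (Algebra.smul_def k a) }

/-- The quotient map as a `K`-algebra homomorphism. -/
noncomputable def quotAlgHom {K A : Type*} [CommSemiring K] [Semiring A] [Algebra K A]
    (c : RingCon A) : A →ₐ[K] c.Quotient :=
  { RingCon.mk' c with commutes' := fun _ => rfl }

/-- Data exhibiting the `K`-algebra `B` as the associated graded algebra `G(A)` of the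
`ℕ`-filtered algebra `A` with filtration `F`. -/
structure AssocGradedData (K A B : Type) [Field K] [Ring A] [Algebra K A]
    [Ring B] [Algebra K B] (F : ℕ → Submodule K A) : Type where
  mono : Monotone F
  one_mem : (1 : A) ∈ F 0
  mul_mem : ∀ p q : ℕ, ∀ x ∈ F p, ∀ y ∈ F q, x * y ∈ F (p + q)
  exhaustive : ∀ a : A, ∃ p : ℕ, a ∈ F p
  gr : ∀ p : ℕ, F p →ₗ[K] B
  gr_ker_zero : ∀ x : F 0, gr 0 x = 0 ↔ (x : A) = 0
  gr_ker_succ : ∀ (p : ℕ) (x : F (p + 1)), gr (p + 1) x = 0 ↔ (x : A) ∈ F p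
  internal : DirectSum.IsInternal (fun p : ℕ => LinearMap.range (gr p))
  gr_mul : ∀ (p q : ℕ) (x : F p) (y : F q),
    gr p x * gr q y = gr (p + q) ⟨(x : A) * (y : A), mul_mem p q x x.2 y y.2⟩
  gr_one : gr 0 ⟨1, one_mem⟩ = 1

variable {K : Type} [Field K] {n : ℕ} {wt : Fin n → ℕ}

lemma wdeg_mul (u v : Word n) : wdeg wt (u * v) = wdeg wt u + wdeg wt v := by
  simp [wdeg, FreeMonoid.toList_mul]

lemma wdeg_one : wdeg wt (1 : Word n) = 0 := rfl

lemma mono_mul (u v : Word n) : (mono (u * v) : FreeAlg K n) = mono u * mono v := by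
  simp [mono, MonoidAlgebra.single_mul_single]

lemma mono_one : (mono 1 : FreeAlg K n) = 1 := rfl

lemma mono_ne_zero (w : Word n) : (mono w : FreeAlg K n) ≠ 0 := by
  simp [mono, MonoidAlgebra.single_eq_zero]

lemma support_mono (w : Word n) : (mono w : FreeAlg K n).coeff.support = {w} := by
  rw [mono, MonoidAlgebra.coeff_single, Finsupp.support_single_ne_zero _ (one_ne_zero)]

lemma mem_span_mono {S : Set (Word n)} {f : FreeAlg K n} (h : ↑f.coeff.support ⊆ S) :
    f ∈ Submodule.span K (mono '' S) := by
  have : f = ∑ w ∈ f.coeff.support, f.coeff w • mono w := by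
    conv_lhs => rw [← MonoidAlgebra.sum_coeff_single f]
    rw [Finsupp.sum]
    refine Finset.sum_congr rfl fun w hw => ?_
    rw [mono, MonoidAlgebra.smul_single', mul_one]
  rw [this]
  exact Submodule.sum_mem _ fun w hw => Submodule.smul_mem _ _
    (Submodule.subset_span ⟨w, h hw, rfl⟩)

lemma support_subset_of_mem_span {S : Set (Word n)} {f : FreeAlg K n}
    (h : f ∈ Submodule.span K (mono '' S)) : ↑f.coeff.support ⊆ S := by
  induction h using Submodule.span_induction with
  | mem x hx =>
    obtain ⟨w, hw, rfl⟩ := hx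
    rw [support_mono]; simpa
  | zero => simp
  | add x y _ _ hx hy =>
    intro a ha
    rcases Finset.mem_union.mp (Finsupp.support_add (ha : a ∈ (x.coeff + y.coeff).support)) with h' | h'
    · exact hx h'
    · exact hy h'
  | smul c x _ hx =>
    exact fun a ha => hx (Finsupp.support_smul (ha : a ∈ (c • x.coeff).support))

variable {o : MonOrder n}

lemma MonOrder.not_lt_self (o : MonOrder n) (u : Word n) : ¬ o.lt u u := fun h =>
  (o.wf.asymmetric _ _ h) h

lemma MonOrder.asymm {u v : Word n} (h : o.lt u v) : ¬ o.lt v u := o.wf.asymmetric _ _ h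

lemma exists_max {s : Finset (Word n)} (hs : s.Nonempty) :
    ∃ w ∈ s, ∀ v ∈ s, v ≠ w → o.lt v w := by
  classical
  induction s using Finset.induction with
  | empty => simp at hs
  | @insert a s ha ih =>
    rcases s.eq_empty_or_nonempty with rfl | hne
    · exact ⟨a, by simp, by simp⟩
    · obtain ⟨w, hw, hmax⟩ := ih hne
      rcases o.trichotomous a w with h | rfl | h
      · refine ⟨w, Finset.mem_insert_of_mem hw, fun v hv hne' => ?_⟩
        rcases Finset.mem_insert.mp hv with rfl | hv'
        · exact h
        · exact hmax v hv' hne'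
      · exact ⟨a, Finset.mem_insert_self _ _, fun v hv hne' =>
          hmax v ((Finset.mem_insert.mp hv).resolve_left hne') hne'⟩
      · refine ⟨a, Finset.mem_insert_self _ _, fun v hv hne' => ?_⟩
        rcases Finset.mem_insert.mp hv with rfl | hv'
        · exact absurd rfl hne'
        · rcases o.trichotomous v w with h' | rfl | h'
          · exact o.trans h' h
          · exact h
          · exact absurd (hmax v hv' (fun e => o.not_lt_self w (e ▸ h'))) (o.asymm h')

lemma LM_spec {f : FreeAlg K n} (hf : f ≠ 0) :
    LM o f ∈ f.coeff.support ∧ ∀ v ∈ f.coeff.support, v ≠ LM o f → o.lt v (LM o f) := by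
  have hne : f.coeff.support.Nonempty := Finsupp.support_nonempty_iff.mpr (fun e => hf (MonoidAlgebra.coeff_eq_zero.mp e))
  have h : ∃ w ∈ f.coeff.support, ∀ v ∈ f.coeff.support, v ≠ w → o.lt v w := exists_max hne
  rw [LM, dif_pos h]
  exact ⟨h.choose_spec.1, h.choose_spec.2⟩

lemma LM_mem {f : FreeAlg K n} (hf : f ≠ 0) : LM o f ∈ f.coeff.support := (LM_spec hf).1

lemma lt_LM {f : FreeAlg K n} (hf : f ≠ 0) {v : Word n} (hv : v ∈ f.coeff.support)
    (hne : v ≠ LM o f) : o.lt v (LM o f) := (LM_spec hf).2 v hv hne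

section graded
variable (hgr : ∀ u v : Word n, wdeg wt u < wdeg wt v → o.lt u v)
include hgr

lemma wdeg_le_LM {f : FreeAlg K n} (hf : f ≠ 0) {v : Word n} (hv : v ∈ f.coeff.support) :
    wdeg wt v ≤ wdeg wt (LM o f) := by
  by_contra h
  push_neg at h
  have h1 : o.lt (LM o f) v := hgr _ _ h
  have hne : v ≠ LM o f := fun e => by subst e; exact (lt_irrefl _ h)
  exact o.asymm h1 (lt_LM hf hv hne)

lemma sup_wdeg_eq_LM {f : FreeAlg K n} (hf : f ≠ 0) :
    f.coeff.support.sup (wdeg wt) = wdeg wt (LM o f) :=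
  le_antisymm (Finset.sup_le fun v hv => wdeg_le_LM hgr hf hv)
    (Finset.le_sup (LM_mem hf))

end graded

/-! ### Homogeneous components -/

noncomputable def Hcomp (wt : Fin n → ℕ) (p : ℕ) (f : FreeAlg K n) : FreeAlg K n :=
  MonoidAlgebra.ofCoeff (Finsupp.filter (fun w => wdeg wt w = p) f.coeff)

lemma LH_eq_Hcomp (f : FreeAlg K n) : LH wt f = Hcomp wt (f.coeff.support.sup (wdeg wt)) f := rfl

lemma Hcomp_apply (p : ℕ) (f : FreeAlg K n) (w : Word n) :
    (Hcomp wt p f).coeff w = if wdeg wt w = p then f.coeff w else 0 := by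
  rw [Hcomp, MonoidAlgebra.coeff_ofCoeff, Finsupp.filter_apply]

lemma Hcomp_add (p : ℕ) (f g : FreeAlg K n) :
    Hcomp wt p (f + g) = Hcomp wt p f + Hcomp wt p g := by
  simp only [Hcomp]; rw [MonoidAlgebra.coeff_add, Finsupp.filter_add, MonoidAlgebra.ofCoeff_add]

lemma Hcomp_smul (p : ℕ) (c : K) (f : FreeAlg K n) :
    Hcomp wt p (c • f) = c • Hcomp wt p f := by
  simp only [Hcomp]; rw [MonoidAlgebra.coeff_smul, Finsupp.filter_smul, MonoidAlgebra.ofCoeff_smul]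

lemma Hcomp_sub (p : ℕ) (f g : FreeAlg K n) :
    Hcomp wt p (f - g) = Hcomp wt p f - Hcomp wt p g := by
  simp only [Hcomp]; rw [MonoidAlgebra.coeff_sub, Finsupp.filter_sub, MonoidAlgebra.ofCoeff_sub]

lemma Hcomp_zero (p : ℕ) : Hcomp wt p (0 : FreeAlg K n) = 0 := by
  ext w; simp [Hcomp_apply]

lemma support_Hcomp (p : ℕ) (f : FreeAlg K n) :
    (Hcomp wt p f).coeff.support = f.coeff.support.filter (fun w => wdeg wt w = p) := by
  rw [Hcomp, MonoidAlgebra.coeff_ofCoeff, Finsupp.support_filter]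

lemma mem_support_Hcomp {p : ℕ} {f : FreeAlg K n} {w : Word n} :
    w ∈ (Hcomp wt p f).coeff.support ↔ w ∈ f.coeff.support ∧ wdeg wt w = p := by
  rw [support_Hcomp, Finset.mem_filter]

lemma Hcomp_mono (p : ℕ) (w : Word n) :
    Hcomp wt p (mono w : FreeAlg K n) = if wdeg wt w = p then mono w else 0 := by
  ext v
  simp only [Hcomp_apply]
  by_cases h : wdeg wt w = p
  · rw [if_pos h]
    by_cases hv : wdeg wt v = p
    · rw [if_pos hv]
    · rw [if_neg hv]
      by_cases hvw : v = w
      · exact absurd (hvw ▸ h) hv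
      · simp [mono, MonoidAlgebra.coeff_single, Finsupp.single_apply, Ne.symm hvw]
  · rw [if_neg h]
    by_cases hv : wdeg wt v = p
    · rw [if_pos hv]
      have hvw : v ≠ w := fun e => h (e ▸ hv)
      simp [mono, MonoidAlgebra.coeff_single, Finsupp.single_apply, Ne.symm hvw]
    · simp [if_neg hv]

lemma sum_Hcomp (f : FreeAlg K n) :
    f = ∑ p ∈ f.coeff.support.image (wdeg wt), Hcomp wt p f := by
  ext w
  rw [MonoidAlgebra.coeff_sum, Finset.sum_apply']
  simp only [Hcomp_apply]
  rw [Finset.sum_ite_eq (f.coeff.support.image (wdeg wt)) (wdeg wt w) (fun _ => f.coeff w)]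
  by_cases hw : w ∈ f.coeff.support
  · rw [if_pos (Finset.mem_image_of_mem _ hw)]
  · rw [Finsupp.notMem_support_iff.mp hw]; split <;> rfl

lemma Hcomp_eq_self {p : ℕ} {f : FreeAlg K n} (h : ∀ w ∈ f.coeff.support, wdeg wt w = p) :
    Hcomp wt p f = f := by
  ext w
  rw [Hcomp_apply]
  by_cases hw : w ∈ f.coeff.support
  · rw [if_pos (h w hw)]
  · rw [Finsupp.notMem_support_iff.mp hw]; split <;> rfl

lemma Hcomp_eq_zero_of_lt {p : ℕ} {f : FreeAlg K n} (h : ∀ w ∈ f.coeff.support, wdeg wt w < p) :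
    Hcomp wt p f = 0 := by
  ext w
  rw [Hcomp_apply]
  by_cases hw : w ∈ f.coeff.support
  · rw [if_neg (Nat.ne_of_lt (h w hw))]; rfl
  · rw [Finsupp.notMem_support_iff.mp hw]; split <;> rfl

/-! ### Multiplication by monomials -/

lemma conj_inj (w s : Word n) : Function.Injective (fun v : Word n => w * v * s) := by
  intro a b h
  simp only at h
  exact mul_left_cancel (mul_right_cancel h)

lemma mono_mul_mono (w s : Word n) (f : FreeAlg K n) :
    mono w * f * mono s = MonoidAlgebra.mapDomain (fun v => w * v * s) f := by
  induction f using MonoidAlgebra.induction_linear with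
  | zero => simp
  | add f g hf hg => rw [mul_add, add_mul, hf, hg, MonoidAlgebra.mapDomain_add]
  | single v c =>
    rw [MonoidAlgebra.mapDomain_single]
    show mono w * MonoidAlgebra.single v c * mono s = _
    rw [mono, mono, MonoidAlgebra.single_mul_single, MonoidAlgebra.single_mul_single,
      one_mul, mul_one]

lemma mono_mul_mono_apply (w s : Word n) (f : FreeAlg K n) (v : Word n) :
    ((mono w * f * mono s : FreeAlg K n)).coeff (w * v * s) = f.coeff v := by
  rw [mono_mul_mono, MonoidAlgebra.mapDomain, MonoidAlgebra.coeff_ofCoeff,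
    Finsupp.mapDomain_apply (conj_inj w s)]

lemma support_mono_mul_mono (w s : Word n) (f : FreeAlg K n) :
    (mono w * f * mono s).coeff.support = f.coeff.support.image (fun v => w * v * s) := by
  rw [mono_mul_mono]
  exact Finsupp.mapDomain_support_of_injective (conj_inj w s) f.coeff

/-! ### Monomial ideals and divisibility -/

lemma wdvd_mul {ω u : Word n} (h : WDvd ω u) (w s : Word n) : WDvd ω (w * u * s) := by
  obtain ⟨a, b, rfl⟩ := h
  exact ⟨w * a, b * s, by simp [mul_assoc]⟩

lemma mul_mono_eq (g : FreeAlg K n) (v : Word n) :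
    g * mono v = ∑ w ∈ g.coeff.support, g.coeff w • mono (w * v) := by
  conv_lhs => rw [← MonoidAlgebra.sum_coeff_single g, Finsupp.sum, Finset.sum_mul]
  refine Finset.sum_congr rfl fun w _ => ?_
  show MonoidAlgebra.single w (g.coeff w) * mono v = _
  rw [mono, MonoidAlgebra.single_mul_single, mul_one, mono]
  rw [MonoidAlgebra.smul_single', mul_one]

lemma mono_mul_eq (g : FreeAlg K n) (v : Word n) :
    mono v * g = ∑ w ∈ g.coeff.support, g.coeff w • mono (v * w) := by
  conv_lhs => rw [← MonoidAlgebra.sum_coeff_single g, Finsupp.sum, Finset.mul_sum]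
  refine Finset.sum_congr rfl fun w _ => ?_
  show mono v * MonoidAlgebra.single w (g.coeff w) = _
  rw [mono, MonoidAlgebra.single_mul_single, one_mul, mono]
  rw [MonoidAlgebra.smul_single', mul_one]

lemma exists_divisor_of_mem_monIdeal {Ω : Set (Word n)} {u : Word n}
    (h : (mono u : FreeAlg K n) ∈ monIdeal K Ω) : ∃ ω ∈ Ω, WDvd ω u := by
  classical
  set D : Set (Word n) := {v | ∃ ω ∈ Ω, WDvd ω v} with hD
  set M : Submodule K (FreeAlg K n) := Submodule.span K (mono '' D) with hM
  have hmulL : ∀ (g x : FreeAlg K n), x ∈ M → g * x ∈ M := by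
    intro g x hx
    induction hx using Submodule.span_induction with
    | mem y hy =>
      obtain ⟨v, hv, rfl⟩ := hy
      rw [mul_mono_eq]
      refine M.sum_mem fun w _ => M.smul_mem _ (Submodule.subset_span ⟨w * v, ?_, rfl⟩)
      obtain ⟨ω, hω, hdvd⟩ := hv
      have := wdvd_mul hdvd w 1
      rw [mul_one] at this
      exact ⟨ω, hω, this⟩
    | zero => simpa using M.zero_mem
    | add a b _ _ ha hb => rw [mul_add]; exact M.add_mem ha hb
    | smul c a _ ha => rw [mul_smul_comm]; exact M.smul_mem c ha
  have hmulR : ∀ (g x : FreeAlg K n), x ∈ M → x * g ∈ M := by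
    intro g x hx
    induction hx using Submodule.span_induction with
    | mem y hy =>
      obtain ⟨v, hv, rfl⟩ := hy
      rw [mono_mul_eq]
      refine M.sum_mem fun w _ => M.smul_mem _ (Submodule.subset_span ⟨v * w, ?_, rfl⟩)
      obtain ⟨ω, hω, hdvd⟩ := hv
      have := wdvd_mul hdvd 1 w
      rw [one_mul] at this
      exact ⟨ω, hω, this⟩
    | zero => simpa using M.zero_mem
    | add a b _ _ ha hb => rw [add_mul]; exact M.add_mem ha hb
    | smul c a _ ha => rw [smul_mul_assoc]; exact M.smul_mem c ha
  set M' : TwoSidedIdeal (FreeAlg K n) := TwoSidedIdeal.mk' (M : Set (FreeAlg K n))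
    M.zero_mem (fun ha hb => M.add_mem ha hb) (fun ha => M.neg_mem ha)
    (fun {x y} hy => hmulL x y hy) (fun {x y} hx => hmulR y x hx) with hM'
  have hsub : monIdeal K Ω ≤ M' := by
    intro x hx
    rw [monIdeal, TwoSidedIdeal.mem_span_iff] at hx
    refine hx M' fun y hy => ?_
    obtain ⟨ω, hω, rfl⟩ := hy
    rw [hM', TwoSidedIdeal.coe_mk']
    exact Submodule.subset_span ⟨ω, ⟨ω, hω, 1, 1, by simp⟩, rfl⟩
  have hu : (mono u : FreeAlg K n) ∈ M := by
    have := hsub h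
    rwa [hM', TwoSidedIdeal.mem_mk'] at this
  have hsupp := support_subset_of_mem_span hu
  rw [support_mono] at hsupp
  exact hsupp (Finset.mem_singleton_self u)

/-! ### Gröbner basis: leading homogeneous parts of ideal elements -/

lemma smul_mem_tsi (J : TwoSidedIdeal (FreeAlg K n)) (c : K) {x : FreeAlg K n}
    (hx : x ∈ J) : c • x ∈ J := by
  rw [Algebra.smul_def]; exact J.mul_mem_left _ _ hx

lemma Hcomp_conj (w s : Word n) (g : FreeAlg K n) (p₀ q : ℕ)
    (hq : q = wdeg wt w + p₀ + wdeg wt s) :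
    Hcomp wt q (mono w * g * mono s) = mono w * Hcomp wt p₀ g * mono s := by
  induction g using MonoidAlgebra.induction_linear with
  | zero => simp [Hcomp_zero]
  | add f g hf hg =>
    rw [mul_add, add_mul, Hcomp_add, hf, hg, show Hcomp wt p₀ (f + g) = _ from Hcomp_add _ _ _,
      mul_add, add_mul]
  | single v c =>
    have hv : (MonoidAlgebra.single v c : FreeAlg K n) = c • mono v := by
      rw [mono, MonoidAlgebra.smul_single', mul_one]
    rw [hv, mul_smul_comm, smul_mul_assoc, Hcomp_smul, Hcomp_smul, ← mono_mul, ← mono_mul,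
      Hcomp_mono, Hcomp_mono]
    by_cases h : wdeg wt v = p₀
    · rw [if_pos h, if_pos (by rw [wdeg_mul, wdeg_mul, h, hq]), mono_mul, mono_mul]
      simp [mul_smul_comm, smul_mul_assoc]
    · rw [if_neg h, if_neg (fun hc => h ?_)]
      · simp
      · rw [wdeg_mul, wdeg_mul, hq] at hc
        omega

lemma LH_mem_span {o : MonOrder n} (hgr : ∀ u v : Word n, wdeg wt u < wdeg wt v → o.lt u v)
    {𝒢 : Set (FreeAlg K n)} {I : TwoSidedIdeal (FreeAlg K n)}
    (hGB : IsGrobnerBasis o 𝒢 I) :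
    ∀ u : Word n, ∀ g : FreeAlg K n, g ∈ I → g ≠ 0 → LM o g = u →
      LH wt g ∈ TwoSidedIdeal.span (LH wt '' 𝒢) := by
  set J := TwoSidedIdeal.span (LH wt '' 𝒢) with hJ
  intro u
  refine o.wf.induction
    (C := fun u => ∀ g : FreeAlg K n, g ∈ I → g ≠ 0 → LM o g = u → LH wt g ∈ J) u
    (fun u ih g hgI hg0 hLMu => ?_)
  subst hLMu
  -- find a divisor of the leading monomial among the leading monomials of 𝒢
  have hmem : (mono (LM o g) : FreeAlg K n) ∈ monIdeal K (LM o '' 𝒢) := by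
    rw [← hGB.2]
    exact TwoSidedIdeal.subset_span ⟨LM o g, ⟨g, ⟨hgI, hg0⟩, rfl⟩, rfl⟩
  obtain ⟨ω, hω, w, s, hdvd⟩ := exists_divisor_of_mem_monIdeal hmem
  obtain ⟨g₀, hg₀𝒢, rfl⟩ := hω
  obtain ⟨hg₀I, hg₀0⟩ := hGB.1 hg₀𝒢
  set u₀ := LM o g₀ with hu₀
  set c : K := g.coeff (LM o g) with hc
  set c₀ : K := g₀.coeff u₀ with hc₀
  have hcne : c ≠ 0 := Finsupp.mem_support_iff.mp (LM_mem hg0)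
  have hc₀ne : c₀ ≠ 0 := Finsupp.mem_support_iff.mp (LM_mem hg₀0)
  set m : FreeAlg K n := (c * c₀⁻¹) • (mono w * g₀ * mono s) with hm
  set p : ℕ := wdeg wt (LM o g) with hp
  set p₀ : ℕ := wdeg wt u₀ with hp₀
  have hpeq : p = wdeg wt w + p₀ + wdeg wt s := by
    rw [hp, hdvd, wdeg_mul, wdeg_mul]
  -- coefficient of m at LM o g
  have hmcoef : m.coeff (LM o g) = c := by
    rw [hm, MonoidAlgebra.coeff_smul, Finsupp.smul_apply, hdvd, mono_mul_mono_apply, smul_eq_mul, ← hc₀,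
      mul_assoc, inv_mul_cancel₀ hc₀ne, mul_one]
  -- support of m
  have hmsupp : ∀ v ∈ m.coeff.support, ∃ v' ∈ g₀.coeff.support, v = w * v' * s := by
    intro v hv
    have h1 : v ∈ (mono w * g₀ * mono s : FreeAlg K n).coeff.support := by
      have hsub := Finsupp.support_smul (b := c * c₀⁻¹) (g := (mono w * g₀ * mono s).coeff)
      rw [hm] at hv
      exact hsub hv
    rw [support_mono_mul_mono] at h1
    obtain ⟨v', hv', rfl⟩ := Finset.mem_image.mp h1
    exact ⟨v', hv', rfl⟩
  have hmlt : ∀ v ∈ m.coeff.support, v ≠ LM o g → o.lt v (LM o g) := by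
    intro v hv hne
    obtain ⟨v', hv', rfl⟩ := hmsupp v hv
    have hv'ne : v' ≠ u₀ := fun e => hne (by rw [e, ← hdvd])
    have := lt_LM hg₀0 hv' hv'ne
    rw [hdvd]
    exact o.mul_compat _ _ _ _ this
  have hmdeg : ∀ v ∈ m.coeff.support, wdeg wt v ≤ p := by
    intro v hv
    obtain ⟨v', hv', rfl⟩ := hmsupp v hv
    rw [wdeg_mul, wdeg_mul, hpeq]
    have := wdeg_le_LM hgr hg₀0 hv'
    rw [← hu₀] at this
    omega
  -- m belongs to I and its top component belongs to J
  have hmI : m ∈ I := smul_mem_tsi I _ (I.mul_mem_right _ _ (I.mul_mem_left _ _ hg₀I))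
  have hg₀sup : g₀.coeff.support.sup (wdeg wt) = p₀ := sup_wdeg_eq_LM hgr hg₀0
  have hmtop : Hcomp wt p m ∈ J := by
    rw [hm, Hcomp_smul, Hcomp_conj w s g₀ p₀ p hpeq]
    refine smul_mem_tsi J _ (J.mul_mem_right _ _ (J.mul_mem_left _ _ ?_))
    have : LH wt g₀ = Hcomp wt p₀ g₀ := by rw [LH_eq_Hcomp, hg₀sup]
    rw [← this]
    exact TwoSidedIdeal.subset_span ⟨g₀, hg₀𝒢, rfl⟩
  -- the reduction g' = g - m
  set g' : FreeAlg K n := g - m with hg'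
  have hg'I : g' ∈ I := I.sub_mem hgI hmI
  have hg'supp : ∀ v ∈ g'.coeff.support, v ∈ g.coeff.support ∪ m.coeff.support := by
    intro v hv
    by_contra hcon
    rw [Finset.mem_union, not_or] at hcon
    have h1 : g.coeff v = 0 := Finsupp.notMem_support_iff.mp hcon.1
    have h2 : m.coeff v = 0 := Finsupp.notMem_support_iff.mp hcon.2
    have : g'.coeff v = 0 := by rw [hg', MonoidAlgebra.coeff_sub, Finsupp.sub_apply, h1, h2, sub_zero]
    exact Finsupp.mem_support_iff.mp hv this
  have hg'LM : g'.coeff (LM o g) = 0 := by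
    rw [hg', MonoidAlgebra.coeff_sub, Finsupp.sub_apply, hmcoef, ← hc, sub_self]
  have hg'lt : ∀ v ∈ g'.coeff.support, o.lt v (LM o g) := by
    intro v hv
    have hne : v ≠ LM o g := fun e => Finsupp.mem_support_iff.mp hv (e ▸ hg'LM)
    rcases Finset.mem_union.mp (hg'supp v hv) with h | h
    · exact lt_LM hg0 h hne
    · exact hmlt v h hne
  have hg'deg : ∀ v ∈ g'.coeff.support, wdeg wt v ≤ p := by
    intro v hv
    rcases Finset.mem_union.mp (hg'supp v hv) with h | h
    · exact wdeg_le_LM hgr hg0 h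
    · exact hmdeg v h
  -- the top component of g' is in J
  have hg'top : Hcomp wt p g' ∈ J := by
    by_cases hg'0 : g' = 0
    · rw [hg'0, Hcomp_zero]; exact J.zero_mem
    · have hlt : o.lt (LM o g') (LM o g) := hg'lt _ (LM_mem hg'0)
      have hIH := ih (LM o g') hlt g' hg'I hg'0 rfl
      set p' : ℕ := g'.coeff.support.sup (wdeg wt) with hp'
      by_cases hpp : p' = p
      · have : Hcomp wt p g' = LH wt g' := by rw [LH_eq_Hcomp, ← hp', hpp]
        rw [this]; exact hIH
      · have hple : p' ≤ p := Finset.sup_le hg'deg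
        have : Hcomp wt p g' = 0 := Hcomp_eq_zero_of_lt fun v hv =>
          lt_of_le_of_lt (Finset.le_sup (f := wdeg wt) hv) (lt_of_le_of_ne hple hpp)
        rw [this]; exact J.zero_mem
  -- conclude
  have hsup : g.coeff.support.sup (wdeg wt) = p := sup_wdeg_eq_LM hgr hg0
  have : LH wt g = Hcomp wt p m + Hcomp wt p g' := by
    rw [LH_eq_Hcomp, hsup, ← Hcomp_add, hg']
    congr 1
    abel
  rw [this]
  exact J.add_mem hmtop hg'top

/-! ### Components of an internal direct sum -/

set_option synthInstance.maxHeartbeats 1000000 in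
lemma component_eq_zero_of_sum_eq_zero {M : Type*} [AddCommGroup M] [Module K M]
    {A : ℕ → Submodule K M} (h : DirectSum.IsInternal A) {s : Finset ℕ} {x : ℕ → M}
    (hx : ∀ p, p ∈ s → x p ∈ A p) (hsum : ∑ p ∈ s, x p = 0) :
    ∀ p ∈ s, x p = 0 := by
  classical
  set f : DirectSum ℕ (fun p => A p) := ∑ p ∈ s.attach, DirectSum.of (fun p => A p) p.1 ⟨x p.1, hx p.1 p.2⟩
    with hf
  have hco : DirectSum.coeAddMonoidHom A f = 0 := by
    rw [hf, map_sum]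
    rw [show (0 : M) = ∑ p ∈ s.attach, x p.1 by
      rw [← hsum, ← Finset.sum_attach s x]]
    exact Finset.sum_congr rfl fun p _ => DirectSum.coeAddMonoidHom_of A p.1 _
  have hf0 : f = 0 := h.injective (by rw [hco, map_zero])
  intro q hq
  have : f q = ⟨x q, hx q hq⟩ := by
    rw [hf, DFinsupp.finset_sum_apply]
    rw [Finset.sum_eq_single ⟨q, hq⟩]
    · rw [DirectSum.of_eq_same]
    · intro b _ hbq
      exact DirectSum.of_eq_of_ne _ _ _ (fun e => hbq (Subtype.ext e.symm))
    · intro hq'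
      exact absurd (Finset.mem_attach s ⟨q, hq⟩) hq'
  rw [hf0] at this
  have := congrArg Subtype.val this.symm
  simpa using this

/-! ### Quotient algebra -/

lemma quotAlgHom_eq_zero_iff (I : TwoSidedIdeal (FreeAlg K n)) (f : FreeAlg K n) :
    quotAlgHom (K := K) I.ringCon f = 0 ↔ f ∈ I := by
  have h1 : quotAlgHom (K := K) I.ringCon f = (f : I.ringCon.Quotient) := rfl
  have h2 : (0 : I.ringCon.Quotient) = ((0 : FreeAlg K n) : I.ringCon.Quotient) := rfl
  rw [h1, h2, RingCon.eq]
  exact Iff.rfl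


set_option maxHeartbeats 1000000 in
/-- Let `≺_gr` be an `ℕ`-graded monomial ordering for a weight `ℕ`-grading of `K⟨X⟩` and
`𝒢` a finite Gröbner basis of `I = ⟨𝒢⟩` w.r.t. `≺_gr`.  Then the associated graded algebra
`G(A)` of `A = K⟨X⟩/I` (for the filtration induced by the grading filtration of `K⟨X⟩`) is
isomorphic, as an `ℕ`-graded `K`-algebra, to `K⟨X⟩/⟨LH(𝒢)⟩`. -/
theorem assocGraded_iso_LH_quotient {K : Type} [Field K] {n : ℕ}
    (wt : Fin n → ℕ) (hwt : ∀ i, 0 < wt i) (o : MonOrder n)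
    (hgr : ∀ u v : Word n, wdeg wt u < wdeg wt v → o.lt u v)
    (𝒢 : Set (FreeAlg K n)) (hfin : 𝒢.Finite)
    (I : TwoSidedIdeal (FreeAlg K n)) (hI : I = TwoSidedIdeal.span 𝒢)
    (hGB : IsGrobnerBasis o 𝒢 I)
    (B : Type) [Ring B] [Algebra K B]
    (d : AssocGradedData K I.ringCon.Quotient B
      (fun p => Submodule.map (quotAlgHom (K := K) I.ringCon).toLinearMap
        (Submodule.span K (mono '' {w : Word n | wdeg wt w ≤ p})))) :
    ∃ e : B ≃ₐ[K] (TwoSidedIdeal.span (LH wt '' 𝒢)).ringCon.Quotient,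
      ∀ p : ℕ,
        Submodule.map e.toLinearMap (LinearMap.range (d.gr p)) =
          Submodule.map
            (quotAlgHom (K := K) (TwoSidedIdeal.span (LH wt '' 𝒢)).ringCon).toLinearMap
            (Submodule.span K (mono '' {w : Word n | wdeg wt w = p})) := by
  classical
  revert d
  set J : TwoSidedIdeal (FreeAlg K n) := TwoSidedIdeal.span (LH wt '' 𝒢) with hJdef
  set πI : FreeAlg K n →ₐ[K] I.ringCon.Quotient := quotAlgHom (K := K) I.ringCon with hπI
  set πJ : FreeAlg K n →ₐ[K] J.ringCon.Quotient := quotAlgHom (K := K) J.ringCon with hπJ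
  set Sp : ℕ → Submodule K (FreeAlg K n) :=
    fun p => Submodule.span K (mono '' {w : Word n | wdeg wt w ≤ p}) with hSp
  set Tp : ℕ → Submodule K (FreeAlg K n) :=
    fun p => Submodule.span K (mono '' {w : Word n | wdeg wt w = p}) with hTp
  intro d
  have mono_mem_Sp : ∀ {p : ℕ} {w : Word n}, wdeg wt w ≤ p → (mono w : FreeAlg K n) ∈ Sp p :=
    fun {p w} h => Submodule.subset_span ⟨w, h, rfl⟩
  have Hcomp_mem_Tp : ∀ (p : ℕ) (f : FreeAlg K n), Hcomp wt p f ∈ Tp p := fun p f =>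
    mem_span_mono (fun w hw => (mem_support_Hcomp.mp hw).2)
  have Tp_le_Sp : ∀ p, Tp p ≤ Sp p := fun p =>
    Submodule.span_mono (Set.image_mono fun w (h : wdeg wt w = p) => le_of_eq h)
  have mem_Sp_of_sup : ∀ (f : FreeAlg K n), f ∈ Sp (f.coeff.support.sup (wdeg wt)) := fun f =>
    mem_span_mono (fun w hw => Finset.le_sup (f := wdeg wt) hw)
  -- transport along proofs and indices
  have grEq : ∀ (p q : ℕ) (hpq : p = q)
      (x : Submodule.map πI.toLinearMap (Sp p)) (y : Submodule.map πI.toLinearMap (Sp q)),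
      (x : I.ringCon.Quotient) = (y : I.ringCon.Quotient) → d.gr p x = d.gr q y := by
    intro p q hpq
    subst hpq
    intro x y hxy
    rw [Subtype.ext hxy]
  have hβmem : ∀ w : Word n, πI (mono w) ∈ Submodule.map πI.toLinearMap (Sp (wdeg wt w)) :=
    fun w => ⟨mono w, mono_mem_Sp le_rfl, rfl⟩
  set β : Word n →* B :=
    { toFun := fun w => d.gr (wdeg wt w) ⟨πI (mono w), hβmem w⟩
      map_one' := by
        show d.gr 0 ⟨πI (mono (1 : Word n)), hβmem 1⟩ = 1
        have h0 : (⟨πI (mono (1 : Word n)), hβmem 1⟩ :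
            Submodule.map πI.toLinearMap (Sp 0)) = ⟨1, d.one_mem⟩ :=
          Subtype.ext (show πI (mono (1 : Word n)) = 1 by rw [mono_one, map_one])
        rw [h0, d.gr_one]
      map_mul' := fun u v => by
        show d.gr (wdeg wt (u * v)) ⟨πI (mono (u * v)), hβmem (u * v)⟩ = _ * _
        rw [d.gr_mul]
        refine grEq _ _ (wdeg_mul u v) _ _ ?_
        show πI (mono (u * v)) = πI (mono u) * πI (mono v)
        rw [mono_mul, map_mul] } with hβ
  set Ψ : FreeAlg K n →ₐ[K] B := (MonoidAlgebra.lift K B (Word n)) β with hΨ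
  have hΨmono : ∀ w : Word n, Ψ (mono w) = β w := fun w => by
    rw [hΨ, mono, MonoidAlgebra.lift_single, one_smul]
  -- the key computation
  have key1 : ∀ (p : ℕ) (f : FreeAlg K n) (hf : f ∈ Sp p),
      Ψ (Hcomp wt p f) = d.gr p ⟨πI f, ⟨f, hf, rfl⟩⟩ := by
    intro p f hf
    induction hf using Submodule.span_induction with
    | mem x hx =>
      obtain ⟨w, hw, rfl⟩ := hx
      rcases eq_or_lt_of_le (show wdeg wt w ≤ p from hw) with heq | hlt
      · rw [Hcomp_mono, if_pos heq, hΨmono]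
        exact grEq _ _ heq _ _ rfl
      · rw [Hcomp_mono, if_neg (Nat.ne_of_lt hlt), map_zero]
        obtain ⟨q, rfl⟩ : ∃ q, p = q + 1 := ⟨p - 1, by omega⟩
        refine ((d.gr_ker_succ q ⟨πI (mono w), _⟩).mpr ?_).symm
        exact ⟨mono w, mono_mem_Sp (by omega), rfl⟩
    | zero =>
      rw [Hcomp_zero, map_zero]
      have h0 : (⟨πI 0, ⟨0, Submodule.zero_mem _, rfl⟩⟩ :
          Submodule.map πI.toLinearMap (Sp p)) = 0 := Subtype.ext (map_zero πI)
      rw [h0, map_zero]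
    | add x y hx hy ihx ihy =>
      rw [Hcomp_add, map_add, ihx, ihy, ← map_add]
      exact grEq p p rfl _ _ (by simp)
    | smul c x hx ihx =>
      rw [Hcomp_smul, map_smul, ihx, ← map_smul]
      exact grEq p p rfl _ _ (by simp)
  have key2 : ∀ p : ℕ, LinearMap.range (d.gr p) = Submodule.map Ψ.toLinearMap (Tp p) := by
    intro p
    apply le_antisymm
    · rintro y ⟨x, rfl⟩
      obtain ⟨f, hf, hx⟩ := x.2
      refine ⟨Hcomp wt p f, Hcomp_mem_Tp p f, ?_⟩
      show Ψ (Hcomp wt p f) = d.gr p x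
      rw [key1 p f hf]
      exact grEq p p rfl _ _ hx
    · rintro y ⟨f, hf, rfl⟩
      have hf' : f ∈ Sp p := Tp_le_Sp p hf
      have hHf : Hcomp wt p f = f :=
        Hcomp_eq_self (fun w hw => support_subset_of_mem_span hf hw)
      exact ⟨⟨πI f, f, hf', rfl⟩, by rw [← key1 p f hf', hHf]; rfl⟩
  -- surjectivity of Ψ
  have surjΨ : Function.Surjective Ψ := by
    intro b
    have hb : b ∈ (⊤ : Submodule K B) := trivial
    rw [← d.internal.submodule_iSup_eq_top] at hb
    have hle : (⨆ p, LinearMap.range (d.gr p)) ≤ LinearMap.range Ψ.toLinearMap := by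
      refine iSup_le fun p => ?_
      rw [key2]
      rintro y ⟨f, _, rfl⟩
      exact ⟨f, rfl⟩
    exact hle hb
  -- homogeneous kernel elements lie in J
  have hker_hom : ∀ (p : ℕ) (h : FreeAlg K n), h ∈ Tp p → Ψ h = 0 → h ∈ J := by
    intro p h hhT hΨ0
    by_cases h0 : h = 0
    · rw [h0]; exact J.zero_mem
    have hf' : h ∈ Sp p := Tp_le_Sp p hhT
    have hsupp : (h.coeff.support : Set (Word n)) ⊆ {w | wdeg wt w = p} :=
      support_subset_of_mem_span hhT
    have hHh : Hcomp wt p h = h := Hcomp_eq_self (fun w hw => hsupp hw)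
    have hgr0 : d.gr p ⟨πI h, ⟨h, hf', rfl⟩⟩ = 0 := by
      rw [← key1 p h hf', hHh, hΨ0]
    cases p with
    | zero =>
      have hπ0 : πI h = 0 := (d.gr_ker_zero ⟨πI h, ⟨h, hf', rfl⟩⟩).mp hgr0
      have hI' : h ∈ I := (quotAlgHom_eq_zero_iff I h).mp hπ0
      have hsup : h.coeff.support.sup (wdeg wt) = 0 :=
        le_antisymm (Finset.sup_le fun w hw => le_of_eq (hsupp hw)) (Nat.zero_le _)
      have hLH : LH wt h = h := by
        rw [LH_eq_Hcomp, hsup]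
        exact Hcomp_eq_self (fun w hw => hsupp hw)
      rw [← hLH]
      exact LH_mem_span hgr hGB (LM o h) h hI' h0 rfl
    | succ q =>
      have hmem : πI h ∈ Submodule.map πI.toLinearMap (Sp q) :=
        (d.gr_ker_succ q ⟨πI h, ⟨h, hf', rfl⟩⟩).mp hgr0
      obtain ⟨f, hfSq, hfeq⟩ := hmem
      set g : FreeAlg K n := h - f with hg
      have hgI : g ∈ I := by
        refine (quotAlgHom_eq_zero_iff I g).mp ?_
        show πI g = 0
        rw [hg, map_sub]
        have : πI f = πI h := hfeq
        rw [this, sub_self]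
      by_cases hgz : g = 0
      · exfalso
        apply h0
        have hhf : h = f := by rwa [sub_eq_zero] at hgz
        have h2 : (h.coeff.support : Set (Word n)) ⊆ {w | wdeg wt w ≤ q} :=
          support_subset_of_mem_span (hhf ▸ hfSq)
        have : h.coeff.support = ∅ := Finset.eq_empty_of_forall_notMem fun w hw => by
          have e1 : wdeg wt w = q + 1 := hsupp hw
          have e2 : wdeg wt w ≤ q := h2 hw
          omega
        exact MonoidAlgebra.coeff_eq_zero.mp (Finsupp.support_eq_empty.mp this)
      · have hfdeg : ∀ w ∈ f.coeff.support, wdeg wt w ≤ q := fun w hw =>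
          support_subset_of_mem_span hfSq hw
        have hHg : Hcomp wt (q + 1) g = h := by
          rw [hg, Hcomp_sub, hHh,
            Hcomp_eq_zero_of_lt (fun w hw => Nat.lt_succ_of_le (hfdeg w hw)), sub_zero]
        have hsupg : g.coeff.support.sup (wdeg wt) = q + 1 := by
          apply le_antisymm
          · refine Finset.sup_le fun w hw => ?_
            rcases Finset.mem_union.mp (Finsupp.support_sub (by rw [hg, MonoidAlgebra.coeff_sub] at hw; exact hw)) with h' | h'
            · exact le_of_eq (hsupp h')
            · exact Nat.le_succ_of_le (hfdeg w h')
          · have hne : Hcomp wt (q + 1) g ≠ 0 := by rw [hHg]; exact h0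
            obtain ⟨w, hw⟩ := Finsupp.support_nonempty_iff.mpr (fun e => hne (MonoidAlgebra.coeff_eq_zero.mp e))
            obtain ⟨hw1, hw2⟩ := mem_support_Hcomp.mp hw
            calc q + 1 = wdeg wt w := hw2.symm
              _ ≤ _ := Finset.le_sup (f := wdeg wt) hw1
        have hLHg : LH wt g = h := by rw [LH_eq_Hcomp, hsupg, hHg]
        rw [← hLHg]
        exact LH_mem_span hgr hGB (LM o g) g hgI hgz rfl
  -- the kernel of Ψ is exactly J
  have hker : ∀ f : FreeAlg K n, Ψ f = 0 → f ∈ J := by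
    intro f hf
    have hcomp0 : ∀ p ∈ f.coeff.support.image (wdeg wt), Ψ (Hcomp wt p f) = 0 := by
      refine component_eq_zero_of_sum_eq_zero d.internal
        (x := fun p => Ψ (Hcomp wt p f)) ?_ ?_
      · intro p _
        rw [key2]
        exact ⟨Hcomp wt p f, Hcomp_mem_Tp p f, rfl⟩
      · rw [← map_sum, ← sum_Hcomp f, hf]
    have hmemJ : ∀ p ∈ f.coeff.support.image (wdeg wt), Hcomp wt p f ∈ J := fun p hp =>
      hker_hom p _ (Hcomp_mem_Tp p f) (hcomp0 p hp)
    have hsumJ : (∑ p ∈ f.coeff.support.image (wdeg wt), Hcomp wt p f) ∈ J := sum_mem hmemJ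
    rwa [← sum_Hcomp f] at hsumJ
  have hJker : ∀ x ∈ J, Ψ x = 0 := by
    intro x hx
    have hle : J ≤ TwoSidedIdeal.ker Ψ.toRingHom := by
      intro y hy
      rw [hJdef, TwoSidedIdeal.mem_span_iff] at hy
      refine hy _ fun z hz => ?_
      obtain ⟨g₀, hg₀𝒢, rfl⟩ := hz
      rw [SetLike.mem_coe, TwoSidedIdeal.mem_ker]
      show Ψ (LH wt g₀) = 0
      obtain ⟨hg₀I, hg₀0⟩ := hGB.1 hg₀𝒢
      have hπ0 : πI g₀ = 0 := (quotAlgHom_eq_zero_iff I g₀).mpr hg₀I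
      rw [LH_eq_Hcomp, key1 _ g₀ (mem_Sp_of_sup g₀)]
      have h0 : (⟨πI g₀, ⟨g₀, mem_Sp_of_sup g₀, rfl⟩⟩ :
          Submodule.map πI.toLinearMap (Sp (g₀.coeff.support.sup (wdeg wt)))) = 0 :=
        Subtype.ext hπ0
      rw [h0, map_zero]
    exact (TwoSidedIdeal.mem_ker _).mp (hle hx)
  -- descend Ψ to an isomorphism from the quotient by J
  set lam : J.ringCon.Quotient →ₐ[K] B :=
    { toFun := fun x => Quotient.liftOn' x Ψ (fun a b hab => by
        have h1 : a - b ∈ J := (J.rel_iff a b).mp hab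
        have h2 := hJker _ h1
        rw [map_sub, sub_eq_zero] at h2
        exact h2)
      map_one' := map_one Ψ
      map_mul' := fun x y => Quotient.inductionOn₂' x y fun a b => map_mul Ψ a b
      map_zero' := map_zero Ψ
      map_add' := fun x y => Quotient.inductionOn₂' x y fun a b => map_add Ψ a b
      commutes' := fun r => Ψ.commutes r } with hlamdef
  have hlam : ∀ f : FreeAlg K n, lam (πJ f) = Ψ f := fun f => rfl
  have hbij : Function.Bijective lam := by
    constructor
    · intro x y
      refine Quotient.inductionOn₂' x y fun a b hab => ?_
      have : Ψ a = Ψ b := hab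
      refine Quotient.sound' ?_
      refine (J.rel_iff a b).mpr (hker _ ?_)
      rw [map_sub, this, sub_self]
    · intro b
      obtain ⟨f, rfl⟩ := surjΨ b
      exact ⟨πJ f, hlam f⟩
  set e : B ≃ₐ[K] J.ringCon.Quotient := (AlgEquiv.ofBijective lam hbij).symm with hedef
  have he : ∀ f : FreeAlg K n, e (Ψ f) = πJ f := fun f => by
    have h1 : Ψ f = (AlgEquiv.ofBijective lam hbij) (πJ f) := (hlam f).symm
    rw [hedef, h1, AlgEquiv.symm_apply_apply]
  refine ⟨e, fun p => ?_⟩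
  rw [key2 p, ← Submodule.map_comp]
  have hcomp : e.toLinearMap.comp Ψ.toLinearMap = πJ.toLinearMap :=
    LinearMap.ext fun f => he f
  rw [hcomp]
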